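/- Let X = {x : ℕ × ℕ → ZMod 2 | ∀ i j, x(i+1,j) + x(i,j) + x(i,j+1) = 0} be the Ledrappier subshift, equipped with the subspace topology from the product topology on ℕ × ℕ → ZMod 2 (ZMod 2 discrete). Then the horizontal shift σ₁ : X → X, (σ₁ x)(i,j) = x(i+1,j), and the vertical shift σ₂ : X → X, (σ₂ x)(i,j) = x(i,j+1), are both local homeomorphisms. -/

import Mathlib

/-- The Ledrappier subshift: configurations `x : ℕ × ℕ → ZMod 2` with
`x(i+1,j) + x(i,j) + x(i,j+1) = 0` for all `i, j`. -/
def Ledrappier : Set ((ℕ × ℕ) → ZMod 2) :=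
  {x | ∀ i j : ℕ, x (i + 1, j) + x (i, j) + x (i, j + 1) = 0}

/-- The horizontal shift on the Ledrappier subshift. -/
def ledShiftH (x : Ledrappier) : Ledrappier :=
  ⟨fun p => x.1 (p.1 + 1, p.2), fun i j => x.2 (i + 1) j⟩

/-- The vertical shift on the Ledrappier subshift. -/
def ledShiftV (x : Ledrappier) : Ledrappier :=
  ⟨fun p => x.1 (p.1, p.2 + 1), fun i j => x.2 i (j + 1)⟩

namespace LedAux

lemma char2_eq {a b c : ZMod 2} (h : a + b + c = 0) : b + c = a := by
  revert h; revert a b c; decide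

lemma char2_cancel {a b : ZMod 2} : a + b + a = b := by
  revert a b; decide

lemma char2_cancel' {a b : ZMod 2} : a + (b + a) = b := by
  revert a b; decide

/-- Extend a row to a full configuration. -/
def F (y : ℕ → ZMod 2) : ℕ → ℕ → ZMod 2
  | 0 => y
  | i + 1 => fun j => F y i j + F y i (j + 1)

lemma F_cont (i j : ℕ) : Continuous fun y : ℕ → ZMod 2 => F y i j := by
  induction i generalizing j with
  | zero => exact continuous_apply j
  | succ i ih => exact (ih j).add (ih (j + 1))

/-- `Ledrappier` is homeomorphic to the space of rows. -/
lemma F_mem (y : ℕ → ZMod 2) : (fun p : ℕ × ℕ => F y p.1 p.2) ∈ Ledrappier := by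
  intro i j
  show F y (i + 1) j + F y i j + F y i (j + 1) = 0
  show (F y i j + F y i (j + 1)) + F y i j + F y i (j + 1) = 0
  generalize F y i j = a; generalize F y i (j+1) = b
  revert a b; decide

def e : Ledrappier ≃ₜ (ℕ → ZMod 2) where
  toFun x := fun j => x.1 (0, j)
  invFun y := ⟨fun p => F y p.1 p.2, F_mem y⟩
  left_inv x := by
    apply Subtype.ext
    funext p
    obtain ⟨i, j⟩ := p
    show F (fun j => x.1 (0, j)) i j = x.1 (i, j)
    induction i generalizing j with
    | zero => rfl
    | succ i ih =>
      show F _ i j + F _ i (j + 1) = x.1 (i + 1, j)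
      rw [ih j, ih (j + 1)]
      exact char2_eq (x.2 i j)
  right_inv y := rfl
  continuous_toFun :=
    continuous_pi fun j => (continuous_apply ((0 : ℕ), j)).comp continuous_subtype_val
  continuous_invFun :=
    Continuous.subtype_mk (continuous_pi fun p : ℕ × ℕ => F_cont p.1 p.2) F_mem

/-- Horizontal shift on rows. -/
def T1 : (ℕ → ZMod 2) → (ℕ → ZMod 2) := fun w j => w j + w (j + 1)

/-- Vertical shift on rows. -/
def T2 : (ℕ → ZMod 2) → (ℕ → ZMod 2) := fun w j => w (j + 1)

/-- Inverse branch of `T1` with prescribed value `c` at 0. -/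
def S1 (c : ZMod 2) (w : ℕ → ZMod 2) : ℕ → ZMod 2
  | 0 => c
  | j + 1 => w j + S1 c w j

/-- Inverse branch of `T2` with prescribed value `c` at 0. -/
def S2 (c : ZMod 2) (w : ℕ → ZMod 2) : ℕ → ZMod 2
  | 0 => c
  | j + 1 => w j

lemma S1_cont (c : ZMod 2) (j : ℕ) : Continuous fun w : ℕ → ZMod 2 => S1 c w j := by
  induction j with
  | zero => exact continuous_const
  | succ j ih => exact (continuous_apply j : Continuous fun w : ℕ → ZMod 2 => w j).add ih

lemma open_slice (c : ZMod 2) : IsOpen {z : ℕ → ZMod 2 | z 0 = c} := by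
  have : {z : ℕ → ZMod 2 | z 0 = c} = (fun z : ℕ → ZMod 2 => z 0) ⁻¹' {c} := by
    ext z; simp
  rw [this]
  exact (continuous_apply 0).isOpen_preimage _ (isOpen_discrete ({c} : Set (ZMod 2)))

/-- `T1` as a partial homeomorphism around points with value `c` at 0. -/
def ph1 (c : ZMod 2) : OpenPartialHomeomorph (ℕ → ZMod 2) (ℕ → ZMod 2) where
  toFun := T1
  invFun := S1 c
  source := {z | z 0 = c}
  target := Set.univ
  map_source' := fun _ _ => trivial
  map_target' := fun _ _ => rfl
  left_inv' := by
    intro z hz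
    funext j
    induction j with
    | zero => exact hz.symm
    | succ j ih =>
      show T1 z j + S1 c (T1 z) j = z (j + 1)
      rw [ih]
      show z j + z (j + 1) + z j = z (j + 1)
      exact char2_cancel
  right_inv' := by
    intro w _
    funext j
    show S1 c w j + (w j + S1 c w j) = w j
    exact char2_cancel'
  open_source := open_slice c
  open_target := isOpen_univ
  continuousOn_toFun :=
    (continuous_pi fun j => (continuous_apply j : Continuous fun w : ℕ → ZMod 2 => w j).add
      (continuous_apply (j + 1) : Continuous fun w : ℕ → ZMod 2 => w (j + 1))).continuousOn
  continuousOn_invFun := (continuous_pi (S1_cont c)).continuousOn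

/-- `T2` as a partial homeomorphism around points with value `c` at 0. -/
def ph2 (c : ZMod 2) : OpenPartialHomeomorph (ℕ → ZMod 2) (ℕ → ZMod 2) where
  toFun := T2
  invFun := S2 c
  source := {z | z 0 = c}
  target := Set.univ
  map_source' := fun _ _ => trivial
  map_target' := fun _ _ => rfl
  left_inv' := by
    intro z hz
    funext j
    cases j with
    | zero => exact hz.symm
    | succ j => rfl
  right_inv' := fun w _ => rfl
  open_source := open_slice c
  open_target := isOpen_univ
  continuousOn_toFun :=
    (continuous_pi fun j => continuous_apply (j + 1)).continuousOn
  continuousOn_invFun := by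
    apply Continuous.continuousOn
    apply continuous_pi
    intro j
    cases j with
    | zero => exact continuous_const
    | succ j => exact continuous_apply j

lemma T1_isLocalHomeomorph : IsLocalHomeomorph T1 :=
  fun w => ⟨ph1 (w 0), rfl, rfl⟩

lemma T2_isLocalHomeomorph : IsLocalHomeomorph T2 :=
  fun w => ⟨ph2 (w 0), rfl, rfl⟩

lemma shiftH_eq : ledShiftH = ⇑e.symm ∘ T1 ∘ ⇑e := by
  funext x
  refine e.injective ?_
  rw [Function.comp_apply, Function.comp_apply, Homeomorph.apply_symm_apply]
  funext j
  show x.1 (1, j) = x.1 (0, j) + x.1 (0, j + 1)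
  exact (char2_eq (x.2 0 j)).symm

lemma shiftV_eq : ledShiftV = ⇑e.symm ∘ T2 ∘ ⇑e := by
  funext x
  refine e.injective ?_
  rw [Function.comp_apply, Function.comp_apply, Homeomorph.apply_symm_apply]
  rfl

end LedAux

/-- The horizontal and vertical shifts of the Ledrappier subshift (with the
subspace topology from the product topology, `ZMod 2` discrete) are local
homeomorphisms. -/
theorem ledrappier_shifts_isLocalHomeomorph :
    IsLocalHomeomorph ledShiftH ∧ IsLocalHomeomorph ledShiftV := by
  constructor
  · rw [LedAux.shiftH_eq]
    exact LedAux.e.symm.isLocalHomeomorph.comp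
      (LedAux.T1_isLocalHomeomorph.comp LedAux.e.isLocalHomeomorph)
  · rw [LedAux.shiftV_eq]
    exact LedAux.e.symm.isLocalHomeomorph.comp
      (LedAux.T2_isLocalHomeomorph.comp LedAux.e.isLocalHomeomorph)
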